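/- Let p₁, p₂, … : X → X be functions on a set X such that each pₙ is idempotent, the pₙ pairwise commute under composition, and the sets Mov pₙ = {x ∈ X : pₙ(x) ≠ x} are pairwise disjoint. Let Z_{n+1} denote the ensemble Π_{i=1}^{n+1}(1−pᵢ) in the ℂ-linear span of maps X → X. Then for every subset T ⊆ X with at most n points, the restriction Z_{n+1}|_T = 0; consequently Z_{n+1} is n-coherent, i.e., Z_{n+1}^{(n)} = 0 as a map C(X)^{⊗n} → C(X)^{⊗n} when X is a topological space and the pᵢ are continuous. -/

import Mathlib

open scoped TensorProduct Classical

noncomputable section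

/-- The ℂ-linear span `⟨Y^X⟩` of the set of continuous maps `X → Y` (ensembles). -/
abbrev Ens (X Y : Type) [TopologicalSpace X] [TopologicalSpace Y] : Type :=
  C(X, Y) →₀ ℂ

variable {X Y W : Type} [TopologicalSpace X] [TopologicalSpace Y] [TopologicalSpace W]

/-- The bilinear extension of composition of maps to ensembles. -/
def Ens.comp (B : Ens Y W) (A : Ens X Y) : Ens X W :=
  B.sum fun b v => A.sum fun a u => Finsupp.single (b.comp a) (v * u)

/-- The identity map `1` as an ensemble. -/
def Ens.one (X : Type) [TopologicalSpace X] : Ens X X :=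
  Finsupp.single (ContinuousMap.id X) 1

/-- A single continuous map viewed as an ensemble. -/
def Ens.of (a : C(X, Y)) : Ens X Y := Finsupp.single a 1

/-- The multilinear map underlying `A^{(r)}`, sending `(f₁,…,f_r)` to
`Σᵢ uᵢ (f₁∘aᵢ)⊗⋯⊗(f_r∘aᵢ)`. -/
def Ens.applM (A : Ens X Y) (r : ℕ) :
    MultilinearMap ℂ (fun _ : Fin r => C(Y, ℂ)) (⨂[ℂ] _ : Fin r, C(X, ℂ)) :=
  A.sum fun a u =>
    u • (PiTensorProduct.tprod ℂ (s := fun _ : Fin r => C(X, ℂ))).compLinearMap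
      (fun _ => (ContinuousMap.compRightAlgHom ℂ ℂ a).toLinearMap)

/-- The induced linear map `A^{(r)} : C(Y)^{⊗r} → C(X)^{⊗r}`. -/
def Ens.applL (A : Ens X Y) (r : ℕ) :
    (⨂[ℂ] _ : Fin r, C(Y, ℂ)) →ₗ[ℂ] ⨂[ℂ] _ : Fin r, C(X, ℂ) :=
  PiTensorProduct.lift (A.applM r)

/-- The restriction `A|_T` of an ensemble to a subset `T ⊆ X`, as an element of the
free ℂ-vector space on the set of maps `T → Y`. -/
def Ens.restr (A : Ens X Y) (T : Set X) : (T → Y) →₀ ℂ :=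
  A.sum fun a u => Finsupp.single (fun t : T => a t) u

/-- The ensemble `Zₙ = Π_{i=1}^{n}(1 − pᵢ)` built from a sequence of self-maps. -/
def Ens.Z (p : ℕ → C(X, X)) (n : ℕ) : Ens X X :=
  ((List.range n).map (fun i => Ens.one X - Ens.of (p (i + 1)))).foldr Ens.comp (Ens.one X)

/-- The ensemble `Tₙ = Σ_{i=1}^{n} Z̄_{i−1} hᵢ`. -/
def Ens.T (q : ℕ → C(Y, Y)) (h : ℕ → C(X, Y)) (n : ℕ) : Ens X Y :=
  ∑ i ∈ Finset.range n, Ens.comp (Ens.Z q i) (Ens.of (h (i + 1)))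

/-- A set of projections and twists connecting topological spaces `X` and `Y`. -/
structure ProjTwist (X Y : Type) [TopologicalSpace X] [TopologicalSpace Y] where
  p : ℕ → C(X, X)
  q : ℕ → C(Y, Y)
  h : ℕ → C(X, Y)
  hb : ℕ → C(Y, X)
  p_idem : ∀ n, (p n).comp (p n) = p n
  p_comm : ∀ i j, (p i).comp (p j) = (p j).comp (p i)
  q_idem : ∀ n, (q n).comp (q n) = q n
  q_comm : ∀ i j, (q i).comp (q j) = (q j).comp (q i)
  p_mov : ∀ i j, i ≠ j → Disjoint {x | p i x ≠ x} {x | p j x ≠ x}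
  q_mov : ∀ i j, i ≠ j → Disjoint {y | q i y ≠ y} {y | q j y ≠ y}
  qh : ∀ i j, (q j).comp (h i) = (h i).comp (p j)
  phb : ∀ i j, (p j).comp (hb i) = (hb i).comp (q j)
  hbh : ∀ i j, (hb j).comp (h i) = (p j).comp (p i)
  hhb : ∀ i j, (h i).comp (hb j) = (q i).comp (q j)

set_option synthInstance.maxHeartbeats 1000000
set_option maxHeartbeats 1000000

namespace ZAux

variable {X : Type} [TopologicalSpace X]

instance : Monoid C(X, X) where
  mul a b := a.comp b
  one := ContinuousMap.id X
  mul_assoc a b c := rfl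
  one_mul a := by ext x; rfl
  mul_one a := by ext x; rfl

lemma mul_eq_comp (a b : C(X, X)) : a * b = a.comp b := rfl

lemma comp_eq_mul (B A : MonoidAlgebra ℂ C(X, X)) : Ens.comp B.coeff A.coeff = (B * A).coeff := by
  rw [Ens.comp, MonoidAlgebra.mul_def]
  simp only [MonoidAlgebra.coeff_finsuppSum, MonoidAlgebra.coeff_single]
  rfl

lemma one_eq : Ens.one X = (1 : MonoidAlgebra ℂ C(X, X)).coeff := by
  rw [MonoidAlgebra.one_def, MonoidAlgebra.coeff_single]
  rfl

lemma of_eq (a : C(X, X)) : Ens.of a = (MonoidAlgebra.single a (1 : ℂ)).coeff := rfl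

/-- the factors of `Z`. -/
def E (p : ℕ → C(X, X)) (i : ℕ) : MonoidAlgebra ℂ C(X, X) :=
  1 - MonoidAlgebra.single (p (i + 1)) 1

lemma Eeq (p : ℕ → C(X, X)) (i : ℕ) : Ens.one X - Ens.of (p (i + 1)) = (E p i).coeff := by
  rw [E, MonoidAlgebra.coeff_sub, one_eq, of_eq]

lemma foldr_comp (l : List (MonoidAlgebra ℂ C(X, X))) (c : MonoidAlgebra ℂ C(X, X)) :
    (l.map MonoidAlgebra.coeff).foldr Ens.comp c.coeff = (l.prod * c).coeff := by
  induction l with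
  | nil => simp
  | cons x l ih => rw [List.map_cons, List.foldr_cons, ih, comp_eq_mul, List.prod_cons, mul_assoc]

lemma Z_eq (p : ℕ → C(X, X)) (m : ℕ) :
    Ens.Z p m = ((List.range m).map (E p)).prod.coeff := by
  rw [Ens.Z]
  simp only [Eeq]
  rw [one_eq]
  rw [← mul_one ((List.range m).map (E p)).prod, ← foldr_comp, List.map_map]
  rfl

end ZAux
namespace ZAux
variable {X Y : Type} [TopologicalSpace X] [TopologicalSpace Y]

lemma restr_eq (A : Ens X Y) (T : Set X) :
    A.restr T = Finsupp.mapDomain (fun a : C(X, Y) => (fun t : T => a t)) A := rfl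

lemma restr_single (a : C(X, Y)) (u : ℂ) (T : Set X) :
    Ens.restr (Finsupp.single a u) T = Finsupp.single (fun t : T => a t) u := by
  rw [restr_eq, Finsupp.mapDomain_single]

lemma restr_sub (A B : Ens X Y) (T : Set X) :
    (A - B).restr T = A.restr T - B.restr T := by
  simp only [restr_eq]
  simpa using
    map_sub (Finsupp.mapDomain.addMonoidHom (fun a : C(X, Y) => (fun t : T => a t))) A B

lemma restr_mul {X : Type} [TopologicalSpace X] (B A : MonoidAlgebra ℂ C(X, X)) (T : Set X) :
    Ens.restr (B * A).coeff T
      = B.coeff.sum fun b v => v • Finsupp.mapDomain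
          (fun g : T → X => (fun t : T => b (g t))) (Ens.restr A.coeff T) := by
  induction A using MonoidAlgebra.induction_linear with
  | zero => simp [restr_eq]
  | add A1 A2 h1 h2 =>
      rw [mul_add]
      have hadd : ∀ (C D : Ens X X), (C + D).restr T = C.restr T + D.restr T := by
        intro C D
        simp only [restr_eq]
        simpa using
          map_add (Finsupp.mapDomain.addMonoidHom (fun a : C(X, X) => (fun t : T => a t))) C D
      rw [MonoidAlgebra.coeff_add, hadd, h1, h2, MonoidAlgebra.coeff_add, hadd]
      rw [← Finsupp.sum_add]
      refine Finsupp.sum_congr fun b _ => ?_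
      rw [Finsupp.mapDomain_add, smul_add]
  | single a u =>
      have key : (B * MonoidAlgebra.single a u).coeff
          = B.coeff.sum fun b v => Finsupp.single (b * a) (v * u) := by
        rw [MonoidAlgebra.mul_def]
        simp only [MonoidAlgebra.coeff_finsuppSum, MonoidAlgebra.coeff_single]
        refine Finsupp.sum_congr fun b _ => ?_
        rw [Finsupp.sum_single_index]
        simp
      rw [key, restr_eq, Finsupp.mapDomain_sum]
      rw [MonoidAlgebra.coeff_single,
        restr_single]
      refine Finsupp.sum_congr fun b _ => ?_
      rw [Finsupp.mapDomain_single, Finsupp.mapDomain_single, Finsupp.smul_single]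
      rfl

lemma restr_mul_zero {X : Type} [TopologicalSpace X] (B A : MonoidAlgebra ℂ C(X, X)) (T : Set X)
    (h : Ens.restr A.coeff T = 0) : Ens.restr (B * A).coeff T = 0 := by
  rw [restr_mul, h]
  simp

end ZAux
namespace ZAux
variable {X : Type} [TopologicalSpace X]

lemma exists_fix (p : ℕ → C(X, X))
    (hmov : ∀ i j, i ≠ j → Disjoint {x | p i x ≠ x} {x | p j x ≠ x})
    (n : ℕ) (T : Set X) (hT : T.Finite) (hc : T.ncard ≤ n) :
    ∃ i < n + 1, ∀ x ∈ T, p (i + 1) x = x := by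
  by_contra hcon
  push_neg at hcon
  have h' : ∀ i : Fin (n + 1), ∃ x, x ∈ T ∧ p ((i : ℕ) + 1) x ≠ x := by
    intro i
    obtain ⟨x, hx1, hx2⟩ := hcon i i.isLt
    exact ⟨x, hx1, hx2⟩
  choose c hcT hcne using h'
  have hinj : Function.Injective c := by
    intro i j hij
    by_contra hne
    have hd := hmov ((i : ℕ) + 1) ((j : ℕ) + 1) (by
      simp only [ne_eq, add_left_inj]
      exact fun hh => hne (Fin.ext hh))
    exact (Set.disjoint_left.mp hd (hcne i)) (hij ▸ hcne j)
  have hsub : (Finset.univ.image c) ⊆ hT.toFinset := by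
    intro x hx
    simp only [Finset.mem_image] at hx
    obtain ⟨i, _, rfl⟩ := hx
    simpa using hcT i
  have hcard := Finset.card_le_card hsub
  rw [Finset.card_image_of_injective _ hinj, Finset.card_univ, Fintype.card_fin] at hcard
  rw [Set.ncard_eq_toFinset_card _ hT] at hc
  omega

lemma commE (p : ℕ → C(X, X))
    (hcomm : ∀ i j, (p i).comp (p j) = (p j).comp (p i)) (a b : ℕ) :
    Commute (E p a) (E p b) := by
  unfold E
  refine Commute.sub_left (Commute.one_left _) (Commute.sub_right (Commute.one_right _) ?_)
  show _ * _ = _ * _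
  rw [MonoidAlgebra.single_mul_single, MonoidAlgebra.single_mul_single]
  congr 1
  rw [mul_eq_comp, mul_eq_comp]
  exact hcomm _ _

lemma part1 (p : ℕ → C(X, X))
    (hcomm : ∀ i j, (p i).comp (p j) = (p j).comp (p i))
    (hmov : ∀ i j, i ≠ j → Disjoint {x | p i x ≠ x} {x | p j x ≠ x})
    (n : ℕ) (T : Set X) (hT : T.Finite) (hc : T.ncard ≤ n) :
    (Ens.Z p (n + 1)).restr T = 0 := by
  obtain ⟨i, hi, hfix⟩ := exists_fix p hmov n T hT hc
  have hmem : E p i ∈ (List.range (n + 1)).map (E p) :=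
    List.mem_map.mpr ⟨i, List.mem_range.mpr hi, rfl⟩
  have hpw : ((List.range (n + 1)).map (E p)).Pairwise Commute := by
    apply List.pairwise_map.mpr
    exact (List.pairwise_lt_range).imp fun _ => commE p hcomm _ _
  have hperm : List.Perm ((List.range (n + 1)).map (E p))
      ((((List.range (n + 1)).map (E p)).erase (E p i)) ++ [E p i]) :=
    (List.perm_cons_erase hmem).trans (List.perm_append_singleton _ _).symm
  have hprod : Ens.Z p (n + 1)
      = (((((List.range (n + 1)).map (E p)).erase (E p i)).prod) * E p i).coeff := by
    rw [Z_eq, hperm.prod_eq' hpw, List.prod_append, List.prod_singleton]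
  rw [hprod]
  apply restr_mul_zero
  rw [← Eeq, restr_sub, Ens.one, Ens.of, restr_single, restr_single, sub_eq_zero]
  congr 1
  funext t
  exact (hfix t t.2).symm
end ZAux
namespace ZAux
set_option synthInstance.maxHeartbeats 1000000
set_option maxHeartbeats 1000000
variable {X Y : Type} [TopologicalSpace X] [TopologicalSpace Y]

lemma applL_tprod (A : Ens X Y) (r : ℕ) (f : Fin r → C(Y, ℂ)) :
    A.applL r (PiTensorProduct.tprod ℂ f)
      = A.sum fun a u => u • PiTensorProduct.tprod ℂ fun j => (f j).comp a := by
  rw [Ens.applL, PiTensorProduct.lift.tprod, Ens.applM, Finsupp.sum, Finsupp.sum,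
    MultilinearMap.sum_apply]
  refine Finset.sum_congr rfl fun a _ => ?_
  rw [MultilinearMap.smul_apply, MultilinearMap.compLinearMap_apply]
  rfl

lemma applL_of_tprod (a : C(X, Y)) (r : ℕ) (f : Fin r → C(Y, ℂ)) :
    (Ens.of a).applL r (PiTensorProduct.tprod ℂ f)
      = PiTensorProduct.tprod ℂ fun j => (f j).comp a := by
  rw [Ens.of, applL_tprod, Finsupp.sum_single_index] <;> simp

lemma applL_one (r : ℕ) : (Ens.one X).applL r = LinearMap.id := by
  apply PiTensorProduct.ext
  apply MultilinearMap.ext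
  intro f
  simp only [LinearMap.compMultilinearMap_apply, LinearMap.id_coe, id_eq]
  rw [Ens.one, applL_tprod, Finsupp.sum_single_index]
  · simp
  · simp

lemma applL_apply_add (A B : Ens X Y) (r : ℕ) (v) :
    (A + B).applL r v = A.applL r v + B.applL r v := by
  have : (A + B).applM r = A.applM r + B.applM r := by
    rw [Ens.applM, Ens.applM, Ens.applM]
    apply Finsupp.sum_add_index' <;> intros <;> simp [add_smul]
  rw [Ens.applL, Ens.applL, Ens.applL, this, map_add, LinearMap.add_apply]

lemma applL_apply_smul (A : Ens X Y) (c : ℂ) (r : ℕ) (v) :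
    (c • A).applL r v = c • A.applL r v := by
  have : (c • A).applM r = c • A.applM r := by
    rw [Ens.applM, Ens.applM, Finsupp.sum_smul_index (fun a => by simp)]
    rw [Finsupp.smul_sum]
    refine Finsupp.sum_congr fun a _ => ?_
    rw [smul_smul]
  rw [Ens.applL, Ens.applL, this, map_smul, LinearMap.smul_apply]

lemma applL_apply_sub (A B : Ens X Y) (r : ℕ) (v) :
    (A - B).applL r v = A.applL r v - B.applL r v := by
  have h : A - B = A + (-1 : ℂ) • B := by
    rw [neg_one_smul, sub_eq_add_neg]
  rw [h, applL_apply_add, applL_apply_smul, neg_one_smul ℂ (B.applL r v), sub_eq_add_neg]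

lemma applL_mul {X : Type} [TopologicalSpace X] (B A : MonoidAlgebra ℂ C(X, X)) (r : ℕ) :
    Ens.applL (B * A).coeff r = (Ens.applL A.coeff r) * (Ens.applL B.coeff r) := by
  apply PiTensorProduct.ext
  apply MultilinearMap.ext
  intro f
  simp only [LinearMap.compMultilinearMap_apply, Module.End.mul_apply]
  rw [applL_tprod, MonoidAlgebra.mul_def]
  simp only [MonoidAlgebra.coeff_finsuppSum, MonoidAlgebra.coeff_single]
  rw [Finsupp.sum_sum_index (fun a => by simp) (fun a b c => by rw [add_smul])]
  rw [applL_tprod, map_finsuppSum]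
  refine Finsupp.sum_congr fun b _ => ?_
  rw [Finsupp.sum_sum_index (fun a => by simp) (fun a b c => by rw [add_smul])]
  rw [LinearMap.map_smul, applL_tprod, Finsupp.smul_sum]
  refine Finsupp.sum_congr fun a _ => ?_
  have hfa : (fun j => (f j).comp (b * a)) = fun j => ((f j).comp b).comp a := by
    funext j; ext x; rfl
  rw [Finsupp.sum_single_index (by simp), smul_smul, mul_comm, hfa]

lemma applL_list_prod {X : Type} [TopologicalSpace X] (l : List (MonoidAlgebra ℂ C(X, X)))
    (r : ℕ) :
    Ens.applL l.prod.coeff r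
      = ((l.map (fun A => (Ens.applL A.coeff r :
          Module.End ℂ (⨂[ℂ] _ : Fin r, C(X, ℂ))))).reverse).prod := by
  induction l with
  | nil =>
      rw [List.prod_nil]
      rw [show (1 : MonoidAlgebra ℂ C(X, X)).coeff = Ens.one X from one_eq.symm, applL_one]
      simp
      rfl
  | cons x l ih =>
      rw [List.prod_cons, applL_mul, ih, List.map_cons, List.reverse_cons, List.prod_append,
        List.prod_singleton]

end ZAux
namespace ZAux
variable {X : Type} [TopologicalSpace X]

/-- The slot operator `f ↦ f - f∘pᵢ` on `C(X,ℂ)`. -/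
def pe (p : ℕ → C(X, X)) (i : ℕ) : Module.End ℂ C(X, ℂ) :=
  1 - (ContinuousMap.compRightAlgHom ℂ ℂ (p i)).toLinearMap

lemma pe_apply (p : ℕ → C(X, X)) (i : ℕ) (g : C(X, ℂ)) :
    pe p i g = g - g.comp (p i) := by
  simp [pe]

/-- The ensemble `1 - pᵢ`. -/
def G (p : ℕ → C(X, X)) (i : ℕ) : MonoidAlgebra ℂ C(X, X) :=
  1 - MonoidAlgebra.single (p i) 1

lemma EG (p : ℕ → C(X, X)) (i : ℕ) : E p i = G p (i + 1) := rfl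

def act (p : ℕ → C(X, X)) : Option ℕ → Module.End ℂ C(X, ℂ)
  | none => 1
  | some i => pe p i

@[simp] lemma act_none (p : ℕ → C(X, X)) : act p none = 1 := rfl

@[simp] lemma act_some (p : ℕ → C(X, X)) (i : ℕ) : act p (some i) = pe p i := rfl

lemma e_orth (p : ℕ → C(X, X))
    (hcomm : ∀ i j, (p i).comp (p j) = (p j).comp (p i))
    (hmov : ∀ i j, i ≠ j → Disjoint {x | p i x ≠ x} {x | p j x ≠ x})
    {i j : ℕ} (hij : i ≠ j) (f : C(X, ℂ)) :
    pe p i (pe p j f) = 0 := by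
  rw [pe_apply, pe_apply]
  ext x
  simp only [ContinuousMap.sub_apply, ContinuousMap.comp_apply, ContinuousMap.zero_apply]
  by_cases hx : p i x = x
  · rw [hx]; ring
  · have hjx : p j x = x := by
      by_contra hne
      exact (Set.disjoint_left.mp (hmov i j hij) hx) hne
    have hcc : p j (p i x) = p i (p j x) := by
      have := hcomm j i
      exact DFunLike.congr_fun this x
    rw [hjx, hcc, hjx]
    ring

lemma hG_apply (p : ℕ → C(X, X)) (i : ℕ) (n : ℕ) (g : Fin n → C(X, ℂ)) :
    Ens.applL (G p i).coeff n (PiTensorProduct.tprod ℂ g)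
      = PiTensorProduct.tprod ℂ g
        - PiTensorProduct.tprod ℂ (fun j => (g j).comp (p i)) := by
  have h1 : (G p i).coeff = Ens.one X - Ens.of (p i) := by rw [G, MonoidAlgebra.coeff_sub, one_eq, of_eq]
  rw [h1, applL_apply_sub, applL_one, applL_of_tprod, LinearMap.id_apply]

lemma key (p : ℕ → C(X, X))
    (hcomm : ∀ i j, (p i).comp (p j) = (p j).comp (p i))
    (hmov : ∀ i j, i ≠ j → Disjoint {x | p i x ≠ x} {x | p j x ≠ x})
    (n : ℕ) (l : List ℕ) :
    l.Nodup →
    ∀ (σ : Fin n → Option ℕ) (f : Fin n → C(X, ℂ)),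
      (∀ (j : Fin n) (i : ℕ), i ∈ l → σ j ≠ some i) →
      (Finset.univ.filter fun j => σ j = none).card < l.length →
      ((l.map fun i => (Ens.applL (G p i).coeff n :
          Module.End ℂ (⨂[ℂ] _ : Fin n, C(X, ℂ)))).prod)
        (PiTensorProduct.tprod ℂ fun j => act p (σ j) (f j)) = 0 := by
  induction l using List.reverseRecOn with
  | nil =>
      intro _ σ f _ hcard
      simp at hcard
  | append_singleton l' i ih =>
      intro hl σ f hσ hcard
      have hnd : l'.Nodup := hl.of_append_left
      have hni : i ∉ l' := by
        have hd := (List.nodup_append.mp hl).2.2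
        exact fun hmem => hd i hmem i (by simp) rfl
      rw [List.map_append, List.prod_append, List.map_singleton, List.prod_singleton,
        Module.End.mul_apply]
      set g0 : Fin n → C(X, ℂ) := fun j => act p (σ j) (f j) with hg0
      set b : Fin n → C(X, ℂ) := fun j => -(pe p i (f j)) with hb
      set N : Finset (Fin n) := Finset.univ.filter (fun j => σ j = none) with hN
      have hslot : (fun j => (g0 j).comp (p i)) = N.piecewise (b + g0) g0 := by
        funext j
        by_cases hj : σ j = none
        · have hjN : j ∈ N := by simp [hN, hj]
          rw [Finset.piecewise_eq_of_mem _ _ _ hjN]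
          simp only [Pi.add_apply, hg0, hb, hj, act_none, Module.End.one_apply, pe_apply]
          ring
        · obtain ⟨k, hk⟩ := Option.ne_none_iff_exists'.mp hj
          have hjN : j ∉ N := by simp [hN, hj]
          rw [Finset.piecewise_eq_of_notMem _ _ _ hjN]
          have hki : i ≠ k := by
            rintro rfl
            exact hσ j i (by simp) hk
          have h0 := e_orth p hcomm hmov hki (f j)
          rw [pe_apply] at h0
          simp only [hg0, hk, act_some]
          exact (sub_eq_zero.mp h0).symm
      rw [hG_apply, hslot]
      have hexp := MultilinearMap.map_piecewise_add
        (PiTensorProduct.tprod ℂ (s := fun _ : Fin n => C(X, ℂ))) b g0 N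
      rw [hexp, map_sub, map_sum]
      rw [Finset.sum_eq_single_of_mem ∅ (Finset.empty_mem_powerset N)]
      · rw [Finset.piecewise_empty, sub_self]
      · intro s hs hsne
        have hsub : s ⊆ N := Finset.mem_powerset.mp hs
        set σ' : Fin n → Option ℕ := fun j => if j ∈ s then some i else σ j with hσ'
        set f' : Fin n → C(X, ℂ) := fun j => if j ∈ s then -(f j) else f j with hf'
        have hpw : s.piecewise b g0 = fun j => act p (σ' j) (f' j) := by
          funext j
          by_cases hj : j ∈ s
          · rw [Finset.piecewise_eq_of_mem _ _ _ hj]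
            simp [hσ', hf', hb, hj, map_neg]
          · rw [Finset.piecewise_eq_of_notMem _ _ _ hj]
            simp [hσ', hf', hg0, hj]
        rw [hpw]
        apply ih hnd σ' f'
        · intro j i' hi'
          by_cases hj : j ∈ s
          · simp only [hσ', hj, if_pos]
            intro h
            exact hni ((Option.some.inj h) ▸ hi')
          · simp only [hσ', hj, if_neg, ite_false]
            exact hσ j i' (List.mem_append_left _ hi')
        · have hfilter : Finset.univ.filter (fun j => σ' j = none) = N \ s := by
            ext j
            by_cases hj : j ∈ s <;> simp [hσ', hN, hj]
          rw [hfilter, Finset.card_sdiff_of_subset hsub]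
          have h1 : 1 ≤ s.card := Finset.card_pos.mpr (Finset.nonempty_iff_ne_empty.mpr hsne)
          have h2 : s.card ≤ N.card := Finset.card_le_card hsub
          have h3 : N.card < l'.length + 1 := by simpa using hcard
          omega

end ZAux
namespace ZAux
variable {X : Type} [TopologicalSpace X]

lemma part2 (p : ℕ → C(X, X))
    (hcomm : ∀ i j, (p i).comp (p j) = (p j).comp (p i))
    (hmov : ∀ i j, i ≠ j → Disjoint {x | p i x ≠ x} {x | p j x ≠ x})
    (n : ℕ) : (Ens.Z p (n + 1)).applL n = 0 := by
  apply PiTensorProduct.ext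
  apply MultilinearMap.ext
  intro f
  simp only [LinearMap.compMultilinearMap_apply, LinearMap.zero_apply]
  rw [Z_eq, applL_list_prod]
  have hmm : (((List.range (n + 1)).map (E p)).map
        (fun A => (Ens.applL A.coeff n : Module.End ℂ (⨂[ℂ] _ : Fin n, C(X, ℂ))))).reverse
      = (((List.range (n + 1)).reverse.map (· + 1)).map
          fun i => (Ens.applL (G p i).coeff n : Module.End ℂ (⨂[ℂ] _ : Fin n, C(X, ℂ)))) := by
    rw [← List.map_reverse, ← List.map_reverse, List.map_map, List.map_map]
    rfl
  rw [hmm]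
  have hnodup : ((List.range (n + 1)).reverse.map (· + 1)).Nodup := by
    refine List.Nodup.map (fun a b h => by omega) ?_
    exact List.nodup_reverse.mpr List.nodup_range
  have hk := key p hcomm hmov n ((List.range (n + 1)).reverse.map (· + 1)) hnodup
    (fun _ => none) f (by simp) (by simp)
  simpa using hk

end ZAux
/-- If `p₁, p₂, … : X → X` are idempotent, pairwise commuting, with pairwise
disjoint moved sets, then the ensemble `Z_{n+1} = Π_{i=1}^{n+1}(1−pᵢ)` restricts to `0` on
every subset of at most `n` points, and consequently `Z_{n+1}` is `n`-coherent:
`Z_{n+1}^{(n)} = 0`. -/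
theorem Z_coherent {X : Type} [TopologicalSpace X] (p : ℕ → C(X, X))
    (hidem : ∀ n, (p n).comp (p n) = p n)
    (hcomm : ∀ i j, (p i).comp (p j) = (p j).comp (p i))
    (hmov : ∀ i j, i ≠ j → Disjoint {x | p i x ≠ x} {x | p j x ≠ x})
    (n : ℕ) :
    (∀ T : Set X, T.Finite → T.ncard ≤ n → (Ens.Z p (n + 1)).restr T = 0) ∧
      (Ens.Z p (n + 1)).applL n = 0 := by
  exact ⟨fun T hT hc => ZAux.part1 p hcomm hmov n T hT hc, ZAux.part2 p hcomm hmov n⟩
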